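/- Let X ⊆ ℝ^d be nonempty, let f : ℝ^d → ℝ^m be continuous, and let k, m ≥ 1. Let P be a Borel probability measure on ℝ^{k×m} with topological support 𝒲, and for each W ∈ 𝒲 let μ_W be a Borel probability measure on ℝ^d with topological support equal to X. Let η ↦ ν_η (η ∈ ℝ^k) be a KL-identifiable family of probability measures, with all KL integrands below assumed measurable and integrable. Assume (A4): there exist x^(1),…,x^(m) ∈ X with [f(x^(1)) ⋯ f(x^(m))] invertible; (A5): there exist W^(1),…,W^(m) ∈ 𝒲 and indices i_1,…,i_m ∈ {1,…,k} with rows W^(1)_{i_1,:},…,W^(m)_{i_m,:} linearly independent; (A6): for every S ⊆ {1,…,m} with P[colsupp(W) = S] > 0 and every nonzero a ∈ ℝ^m with supp(a) ⊆ S, P[{W : W a = 0} ∩ {colsupp(W) = S}] = 0; (A7): for every j, the union of all sets S with P[colsupp(W) = S] > 0 and j ∉ S equals {1,…,m} \ {j}. For continuous g : ℝ^d → ℝ^m define R_g(W̃, W) := ∫ klDiv(ν_{W f(x)}, ν_{W̃ g(x)}) dμ_W(x); call a pair (g, V) with V : 𝒲 → ℝ^{k×m} feasible if for every W ∈ 𝒲,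 V(W) minimizes R_g(·, W) over all of ℝ^{k×m}, and additionally ∫ ‖V(W)‖_{2,0} dP(W) ≤ ∫ ‖W‖_{2,0} dP(W). If (f̂, Ŵ) is a feasible pair with f̂ continuous whose outer value J(f̂, Ŵ) := ∫ R_{f̂}(Ŵ(W), W) dP(W) is no larger than J(g, V) for every feasible pair (g, V), then there exist a permutation matrix Π ∈ ℝ^{m×m} and an invertible diagonal matrix D ∈ ℝ^{m×m} such that f̂(x) = D Π f(x) for all x ∈ X. -/

import Mathlib

open MeasureTheory
open scoped ENNReal BigOperators

noncomputable section

/-- Matrices over `ℝ` carry the Borel σ-algebra of their (product) topology. -/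
instance matrixMeasurableSpace {k m : ℕ} :
    MeasurableSpace (Matrix (Fin k) (Fin m) ℝ) := borel _

instance matrixBorelSpace {k m : ℕ} : BorelSpace (Matrix (Fin k) (Fin m) ℝ) := ⟨rfl⟩

/-- The topological support of a measure: the points all of whose open neighbourhoods
have positive measure. -/
def msupport {α : Type*} [TopologicalSpace α] [MeasurableSpace α]
    (P : Measure α) : Set α :=
  {x | ∀ U : Set α, IsOpen U → x ∈ U → 0 < P U}

/-- The column support of a matrix: indices of its nonzero columns. -/
def colSupp {k m : ℕ} (W : Matrix (Fin k) (Fin m) ℝ) : Set (Fin m) :=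
  {j | ∃ i, W i j ≠ 0}

/-- The column sparsity `‖A‖_{2,0}`: the number of nonzero columns. -/
def colSparsity {k m : ℕ} (W : Matrix (Fin k) (Fin m) ℝ) : ℕ :=
  (colSupp W).ncard

/-- A matrix is a permutation matrix if it is obtained from a permutation `σ`
by putting a `1` in entry `(i, σ i)` and `0` elsewhere. -/
def IsPermMatrix {m : ℕ} (P : Matrix (Fin m) (Fin m) ℝ) : Prop :=
  ∃ σ : Equiv.Perm (Fin m), P = Matrix.of fun i j => if σ i = j then (1 : ℝ) else 0

variable {d k m : ℕ} {Y : Type*} [MeasurableSpace Y]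

/-- The inner population risk
`R_g(W̃, W) = ∫ klDiv (ν (W f x)) (ν (W̃ g x)) dμ_W(x)`. -/
def innerRisk (klDiv : Measure Y → Measure Y → ℝ≥0∞)
    (ν : (Fin k → ℝ) → Measure Y)
    (μ : Matrix (Fin k) (Fin m) ℝ → Measure (Fin d → ℝ))
    (f g : (Fin d → ℝ) → Fin m → ℝ)
    (Wt W : Matrix (Fin k) (Fin m) ℝ) : ℝ≥0∞ :=
  ∫⁻ x, klDiv (ν (W.mulVec (f x))) (ν (Wt.mulVec (g x))) ∂(μ W)

/-- A pair `(g, V)` is feasible for the bi-level problem with the sparsity constraint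
imposed only in expectation over tasks: `g` is continuous, for every task `W` in the
support of `P` the matrix `V W` minimizes `R_g(·, W)` over all of `ℝ^{k×m}`, and
`∫ ‖V W‖_{2,0} dP(W) ≤ ∫ ‖W‖_{2,0} dP(W)`. -/
def FeasibleExpected (klDiv : Measure Y → Measure Y → ℝ≥0∞)
    (ν : (Fin k → ℝ) → Measure Y)
    (μ : Matrix (Fin k) (Fin m) ℝ → Measure (Fin d → ℝ))
    (f : (Fin d → ℝ) → Fin m → ℝ)
    (P : Measure (Matrix (Fin k) (Fin m) ℝ))
    (g : (Fin d → ℝ) → Fin m → ℝ)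
    (V : Matrix (Fin k) (Fin m) ℝ → Matrix (Fin k) (Fin m) ℝ) : Prop :=
  Continuous g ∧
  (∀ W ∈ msupport P, ∀ Wt : Matrix (Fin k) (Fin m) ℝ,
      innerRisk klDiv ν μ f g (V W) W ≤ innerRisk klDiv ν μ f g Wt W) ∧
  (∫⁻ W, (colSparsity (V W) : ℝ≥0∞) ∂P) ≤ ∫⁻ W, (colSparsity W : ℝ≥0∞) ∂P

/-- The outer objective `J(g, V) = ∫ R_g(V W, W) dP(W)`. -/
def outerObj (klDiv : Measure Y → Measure Y → ℝ≥0∞)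
    (ν : (Fin k → ℝ) → Measure Y)
    (μ : Matrix (Fin k) (Fin m) ℝ → Measure (Fin d → ℝ))
    (f : (Fin d → ℝ) → Fin m → ℝ)
    (P : Measure (Matrix (Fin k) (Fin m) ℝ))
    (g : (Fin d → ℝ) → Fin m → ℝ)
    (V : Matrix (Fin k) (Fin m) ℝ → Matrix (Fin k) (Fin m) ℝ) : ℝ≥0∞ :=
  ∫⁻ W, innerRisk klDiv ν μ f g (V W) W ∂P


section AuxSupport
variable {α : Type*} [TopologicalSpace α] [MeasurableSpace α]

lemma msupport_compl_null [SecondCountableTopology α] [OpensMeasurableSpace α]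
    (P : Measure α) : P (msupport P)ᶜ = 0 := by
  obtain ⟨b, hbc, -, hbb⟩ := TopologicalSpace.exists_countable_basis α
  have hsub : (msupport P)ᶜ ⊆ ⋃₀ {B | B ∈ b ∧ P B = 0} := by
    intro x hx
    simp only [Set.mem_compl_iff, msupport, Set.mem_setOf_eq, not_forall] at hx
    obtain ⟨U, hU, hxU, hPU⟩ := hx
    obtain ⟨v, hvb, hxv, hvU⟩ := hbb.exists_subset_of_mem_open hxU hU
    exact ⟨v, ⟨hvb, le_antisymm ((measure_mono hvU).trans (le_of_not_gt hPU)) bot_le⟩, hxv⟩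
  refine measure_mono_null hsub
    ((measure_sUnion_null_iff (hbc.mono (by intro B hB; exact hB.1))).2 ?_)
  intro B hB; exact hB.2

lemma msupport_subset_of_closed {C : Set α} (P : Measure α) (hC : IsClosed C)
    (h : P Cᶜ = 0) : msupport P ⊆ C := by
  intro x hx
  by_contra hxC
  have := hx Cᶜ hC.isOpen_compl hxC
  rw [h] at this; exact lt_irrefl 0 this

end AuxSupport

section AuxLinAlg
open Matrix

lemma dot_eq_zero_forall {m : ℕ} (v : Fin m → Fin m → ℝ) (hv : LinearIndependent ℝ v)
    (u : Fin m → ℝ) (h : ∀ t, v t ⬝ᵥ u = 0) : u = 0 := by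
  have hspan : Submodule.span ℝ (Set.range v) = ⊤ :=
    hv.span_eq_top_of_card_eq_finrank' (by simp)
  let φ : (Fin m → ℝ) →ₗ[ℝ] ℝ :=
    { toFun := fun w => w ⬝ᵥ u
      map_add' := fun a b => add_dotProduct a b u
      map_smul' := fun c a => smul_dotProduct c a u }
  have hall : ∀ w, φ w = 0 := by
    intro w
    have hw : w ∈ Submodule.span ℝ (Set.range v) := by rw [hspan]; trivial
    induction hw using Submodule.span_induction with
    | mem x hx => obtain ⟨t, rfl⟩ := hx; exact h t
    | zero => simp [φ, zero_dotProduct]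
    | add a b _ _ ha hb => simp only [map_add, ha, hb, add_zero]
    | smul c a _ ha => simp only [_root_.map_smul, ha, smul_zero]
  funext i
  have := hall (Pi.single i 1)
  simpa [φ, single_dotProduct] using this

def Tset {m : ℕ} (B : Matrix (Fin m) (Fin m) ℝ) (S : Set (Fin m)) : Set (Fin m) :=
  {j | ∃ i ∈ S, B i j ≠ 0}

lemma Tset_mono {m : ℕ} (B : Matrix (Fin m) (Fin m) ℝ) {S S' : Set (Fin m)}
    (h : S ⊆ S') : Tset B S ⊆ Tset B S' := by
  rintro j ⟨i, hi, hij⟩; exact ⟨i, h hi, hij⟩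

lemma Tset_union {m : ℕ} (B : Matrix (Fin m) (Fin m) ℝ) (S1 S2 : Set (Fin m)) :
    Tset B (S1 ∪ S2) = Tset B S1 ∪ Tset B S2 := by
  ext j
  simp only [Tset, Set.mem_setOf_eq, Set.mem_union]
  constructor
  · rintro ⟨i, hi | hi, hij⟩
    · exact Or.inl ⟨i, hi, hij⟩
    · exact Or.inr ⟨i, hi, hij⟩
  · rintro (⟨i, hi, hij⟩ | ⟨i, hi, hij⟩)
    · exact ⟨i, Or.inl hi, hij⟩
    · exact ⟨i, Or.inr hi, hij⟩

lemma ncard_le_Tset {m : ℕ} {B : Matrix (Fin m) (Fin m) ℝ} (hB : IsUnit B.det)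
    (S : Set (Fin m)) : S.ncard ≤ (Tset B S).ncard := by
  classical
  have hrows : LinearIndependent ℝ (fun i => B i) :=
    Matrix.linearIndependent_rows_iff_isUnit.mpr ((Matrix.isUnit_iff_isUnit_det _).mpr hB)
  have hS : LinearIndependent ℝ (fun i : S => B (i : Fin m)) :=
    hrows.comp _ Subtype.coe_injective
  set T := Tset B S with hT
  let ρ : (Fin m → ℝ) →ₗ[ℝ] (T → ℝ) := LinearMap.funLeft ℝ ℝ (fun j : T => (j : Fin m))
  have hmap : LinearIndependent ℝ (ρ ∘ fun i : S => B (i : Fin m)) := by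
    refine hS.map ?_
    rw [Submodule.disjoint_def]
    have hsupp : ∀ w ∈ Submodule.span ℝ (Set.range fun i : S => B (i : Fin m)),
        ∀ j, j ∉ T → w j = 0 := by
      intro w hw
      induction hw using Submodule.span_induction with
      | mem x hx =>
        obtain ⟨i, rfl⟩ := hx
        intro j hj
        by_contra hne
        exact hj ⟨(i : Fin m), i.2, hne⟩
      | zero => intro j _; rfl
      | add a b _ _ ha hb => intro j hj; simp [Pi.add_apply, ha j hj, hb j hj]
      | smul c a _ ha => intro j hj; simp [Pi.smul_apply, ha j hj]
    intro v hv hv0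
    replace hsupp := hsupp v hv
    have hker : ∀ j, j ∈ T → v j = 0 := by
      intro j hj
      exact congrFun (LinearMap.mem_ker.mp hv0) ⟨j, hj⟩
    funext j
    by_cases hj : j ∈ T
    · exact hker j hj
    · exact hsupp j hj
  haveI : Fintype S := S.toFinite.fintype
  haveI : Fintype T := T.toFinite.fintype
  have hcard : Fintype.card S ≤ Module.finrank ℝ (T → ℝ) :=
    hmap.fintype_card_le_finrank
  rw [Module.finrank_pi] at hcard
  rwa [← Nat.card_coe_set_eq, ← Nat.card_coe_set_eq,
    Nat.card_eq_fintype_card, Nat.card_eq_fintype_card]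

lemma ncard_Tset_union {m : ℕ} {B : Matrix (Fin m) (Fin m) ℝ} (hB : IsUnit B.det)
    {S1 S2 : Set (Fin m)} (h1 : (Tset B S1).ncard = S1.ncard)
    (h2 : (Tset B S2).ncard = S2.ncard) :
    (Tset B (S1 ∪ S2)).ncard = (S1 ∪ S2).ncard := by
  refine le_antisymm ?_ (ncard_le_Tset hB _)
  rw [Tset_union]
  have key : (Tset B S1 ∪ Tset B S2).ncard + (Tset B S1 ∩ Tset B S2).ncard
      = S1.ncard + S2.ncard := by
    rw [Set.ncard_union_add_ncard_inter, h1, h2]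
  have hinter : (S1 ∩ S2).ncard ≤ (Tset B S1 ∩ Tset B S2).ncard := by
    refine (ncard_le_Tset hB _).trans (Set.ncard_le_ncard ?_ (Set.toFinite _))
    exact Set.subset_inter (Tset_mono B Set.inter_subset_left)
      (Tset_mono B Set.inter_subset_right)
  have hS : (S1 ∪ S2).ncard + (S1 ∩ S2).ncard = S1.ncard + S2.ncard :=
    Set.ncard_union_add_ncard_inter _ _
  omega

end AuxLinAlg

/-- **Sparse multi-task learning yields disentanglement (expected sparsity constraint,
Theorem B.5).**  Let `Xs ⊆ ℝ^d` be nonempty, `f : ℝ^d → ℝ^m` continuous, `k, m ≥ 1`, `P` a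
Borel probability measure on `ℝ^{k×m}` with support `𝒲 = msupport P`, and for each
`W ∈ 𝒲` let `μ W` be a Borel probability measure on `ℝ^d` with topological support `Xs`.
Let `η ↦ ν η` be a KL-identifiable family of probability measures (`klDiv` is the
Kullback–Leibler divergence, `ℝ≥0∞`-valued, with `klDiv ρ ρ = 0`), with all KL integrands
measurable.  Under assumptions (A4)–(A7), if `(f̂, Ŵ)` is feasible (inner minimization
is unconstrained, and the sparsity constraint holds in expectation over tasks) with `f̂`
continuous and its outer value is minimal among all feasible pairs, then `f̂` is disentangled
w.r.t. `f`: there are a permutation matrix `Π` and an invertible diagonal matrix `D`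
such that `f̂ x = (D Π) (f x)` for all `x ∈ Xs`. -/
theorem sparse_multitask_learning_disentangles_expected
    (hk : 1 ≤ k) (hm : 1 ≤ m)
    (Xs : Set (Fin d → ℝ)) (hXs : Xs.Nonempty)
    (f : (Fin d → ℝ) → Fin m → ℝ) (hf : Continuous f)
    (P : Measure (Matrix (Fin k) (Fin m) ℝ)) [IsProbabilityMeasure P]
    (μ : Matrix (Fin k) (Fin m) ℝ → Measure (Fin d → ℝ))
    (hμprob : ∀ W ∈ msupport P, IsProbabilityMeasure (μ W))
    (hμsupp : ∀ W ∈ msupport P, msupport (μ W) = Xs)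
    (ν : (Fin k → ℝ) → Measure Y) [∀ η, IsProbabilityMeasure (ν η)]
    (klDiv : Measure Y → Measure Y → ℝ≥0∞)
    (hkl_self : ∀ ρ : Measure Y, klDiv ρ ρ = 0)
    (hkl_id : ∀ η η' : Fin k → ℝ, klDiv (ν η) (ν η') = 0 → η = η')
    (hmeas_inner : ∀ g : (Fin d → ℝ) → Fin m → ℝ, Continuous g →
      ∀ Wt W : Matrix (Fin k) (Fin m) ℝ,
        Measurable fun x => klDiv (ν (W.mulVec (f x))) (ν (Wt.mulVec (g x))))
    (hA4 : ∃ xs : Fin m → (Fin d → ℝ), (∀ t, xs t ∈ Xs) ∧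
      IsUnit (Matrix.of fun i t => f (xs t) i).det)
    (hA5 : ∃ (Ws : Fin m → Matrix (Fin k) (Fin m) ℝ) (idx : Fin m → Fin k),
      (∀ t, Ws t ∈ msupport P) ∧
      LinearIndependent ℝ fun t => Ws t (idx t))
    (hA6 : ∀ S : Set (Fin m), 0 < P {W | colSupp W = S} →
      ∀ a : Fin m → ℝ, a ≠ 0 → {j | a j ≠ 0} ⊆ S →
        P ({W | W.mulVec a = 0} ∩ {W | colSupp W = S}) = 0)
    (hA7 : ∀ j : Fin m,
      (⋃ S ∈ {S : Set (Fin m) | 0 < P {W | colSupp W = S} ∧ j ∉ S}, S) =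
        ({j}ᶜ : Set (Fin m)))
    (fhat : (Fin d → ℝ) → Fin m → ℝ) (hfhat : Continuous fhat)
    (What : Matrix (Fin k) (Fin m) ℝ → Matrix (Fin k) (Fin m) ℝ)
    (hfeas : FeasibleExpected klDiv ν μ f P fhat What)
    (hmeas_outer : Measurable fun W => innerRisk klDiv ν μ f fhat (What W) W)
    (hopt : ∀ (g : (Fin d → ℝ) → Fin m → ℝ)
        (V : Matrix (Fin k) (Fin m) ℝ → Matrix (Fin k) (Fin m) ℝ),
      FeasibleExpected klDiv ν μ f P g V →
        outerObj klDiv ν μ f P fhat What ≤ outerObj klDiv ν μ f P g V) :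
    ∃ (Pmat D : Matrix (Fin m) (Fin m) ℝ),
      IsPermMatrix Pmat ∧ D.IsDiag ∧ IsUnit D.det ∧
      ∀ x ∈ Xs, fhat x = (D * Pmat).mulVec (f x) := by
  classical
  obtain ⟨-, hmin, hsparse⟩ := hfeas
  obtain ⟨xs, hxsX, hF⟩ := hA4
  obtain ⟨Ws, idx, hWsupp, hWli⟩ := hA5
  haveI : SecondCountableTopology (Matrix (Fin k) (Fin m) ℝ) :=
    inferInstanceAs (SecondCountableTopology (Fin k → Fin m → ℝ))
  set F : Matrix (Fin m) (Fin m) ℝ := Matrix.of fun i t => f (xs t) i with hFdef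
  set G : Matrix (Fin m) (Fin m) ℝ := Matrix.of fun i t => fhat (xs t) i with hGdef
  set M : Matrix (Fin m) (Fin m) ℝ := G * F⁻¹ with hMdef
  -- Step A: the outer objective of (fhat, What) is zero
  have hfeas_f : FeasibleExpected klDiv ν μ f P f (fun W => W) := by
    refine ⟨hf, ?_, le_rfl⟩
    intro W _ Wt
    have h0 : innerRisk klDiv ν μ f f W W = 0 := by
      unfold innerRisk; simp [hkl_self]
    rw [h0]; exact zero_le
  have hJ0 : outerObj klDiv ν μ f P fhat What = 0 := by
    refine le_antisymm ?_ zero_le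
    have h1 := hopt f (fun W => W) hfeas_f
    have h2 : outerObj klDiv ν μ f P f (fun W => W) = 0 := by
      unfold outerObj innerRisk; simp [hkl_self]
    rwa [h2] at h1
  have hae0 : ∀ᵐ W ∂P, innerRisk klDiv ν μ f fhat (What W) W = 0 := by
    unfold outerObj at hJ0
    exact (lintegral_eq_zero_iff hmeas_outer).mp hJ0
  have haesupp : ∀ᵐ W ∂P, W ∈ msupport P := by
    rw [MeasureTheory.ae_iff]
    exact msupport_compl_null P
  -- Step B: a.e. task W satisfies W f x = What(W) fhat x on all of Xs
  have hGood : ∀ᵐ W ∂P, ∀ x ∈ Xs, W.mulVec (f x) = (What W).mulVec (fhat x) := by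
    filter_upwards [hae0, haesupp] with W h0 hW
    have hmeasW := hmeas_inner fhat hfhat (What W) W
    have hklae : ∀ᵐ x ∂(μ W),
        klDiv (ν (W.mulVec (f x))) (ν ((What W).mulVec (fhat x))) = 0 := by
      have h1 := (lintegral_eq_zero_iff hmeasW).mp h0
      filter_upwards [h1] with x hx using hx
    set E := {x : Fin d → ℝ | W.mulVec (f x) = (What W).mulVec (fhat x)} with hE
    have hEclosed : IsClosed E :=
      isClosed_eq (continuous_const.matrix_mulVec hf)
        (continuous_const.matrix_mulVec hfhat)
    have hnull : μ W Eᶜ = 0 := by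
      refine measure_mono_null ?_ (ae_iff.mp hklae)
      intro x hx
      simp only [Set.mem_setOf_eq]
      intro hzero
      exact hx (hkl_id _ _ hzero)
    have hsub := msupport_subset_of_closed (μ W) hEclosed hnull
    rw [hμsupp W hW] at hsub
    exact fun x hx => hsub hx
  -- relation at the anchor points
  have hWF : ∀ W : Matrix (Fin k) (Fin m) ℝ,
      (∀ x ∈ Xs, W.mulVec (f x) = (What W).mulVec (fhat x)) → W * F = What W * G := by
    intro W h
    ext i t
    have := congrFun (h (xs t) (hxsX t)) i
    simpa [Matrix.mul_apply, Matrix.mulVec, dotProduct, hFdef, hGdef] using this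
  have hFinv : F * F⁻¹ = 1 := Matrix.mul_nonsing_inv F hF
  have hWM : ∀ W : Matrix (Fin k) (Fin m) ℝ, W * F = What W * G → W = What W * M := by
    intro W h
    calc W = W * F * F⁻¹ := by rw [Matrix.mul_assoc, hFinv, Matrix.mul_one]
    _ = What W * G * F⁻¹ := by rw [h]
    _ = What W * M := by rw [hMdef, Matrix.mul_assoc]
  -- Step C1: M is invertible
  set R : Submodule ℝ (Fin m → ℝ) := LinearMap.range (Matrix.transpose M).mulVecLin with hRdef
  have hrowmem : ∀ (A : Matrix (Fin k) (Fin m) ℝ) (i : Fin k), (A * M) i ∈ R := by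
    intro A i
    refine ⟨A i, ?_⟩
    funext j
    simp only [Matrix.mulVecLin_apply, Matrix.mulVec, dotProduct,
      Matrix.transpose_apply, Matrix.mul_apply]
    exact Finset.sum_congr rfl fun l _ => mul_comm _ _
  set C : Set (Matrix (Fin k) (Fin m) ℝ) := {W | ∀ i, W i ∈ R} with hCdef
  have hCclosed : IsClosed C := by
    have : C = ⋂ i, (fun W : Matrix (Fin k) (Fin m) ℝ => W i) ⁻¹' (R : Set (Fin m → ℝ)) := by
      ext W; simp [hCdef]
    rw [this]
    exact isClosed_iInter fun i =>
      (Submodule.closed_of_finiteDimensional R).preimage (continuous_apply i)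
  have hCae : ∀ᵐ W ∂P, W ∈ C := by
    filter_upwards [hGood] with W h
    intro i
    have hWeq : W = What W * M := hWM W (hWF W h)
    rw [hWeq]
    exact hrowmem (What W) i
  have hCsupp : msupport P ⊆ C :=
    msupport_subset_of_closed P hCclosed (ae_iff.mp hCae)
  have hRtop : R = ⊤ := by
    have hli : LinearIndependent ℝ
        (fun t => (⟨Ws t (idx t), hCsupp (hWsupp t) (idx t)⟩ : R)) := by
      refine LinearIndependent.of_comp R.subtype ?_
      exact hWli
    have h1 : Fintype.card (Fin m) ≤ Module.finrank ℝ R := hli.fintype_card_le_finrank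
    refine Submodule.eq_top_of_finrank_eq (le_antisymm (Submodule.finrank_le R) ?_)
    simpa [Module.finrank_fin_fun] using h1
  have hMdet : IsUnit M.det := by
    have hsurj : Function.Surjective (Matrix.transpose M).mulVec := by
      have := LinearMap.range_eq_top.mp hRtop
      intro y
      obtain ⟨x, hx⟩ := this y
      exact ⟨x, hx⟩
    have := Matrix.mulVec_surjective_iff_isUnit.mp hsurj
    rw [Matrix.isUnit_iff_isUnit_det, Matrix.det_transpose] at this
    exact this
  have hMinv : M * M⁻¹ = 1 := Matrix.mul_nonsing_inv M hMdet
  -- Step C2: fhat = M f on Xs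
  have hfhatM : ∀ x ∈ Xs, fhat x = M.mulVec (f x) := by
    intro x hx
    set u : Fin m → ℝ := M⁻¹.mulVec (fhat x) - f x with hu
    have hCu : ∀ᵐ W ∂P, W.mulVec u = 0 := by
      filter_upwards [hGood] with W h
      have hWeq : W = What W * M := hWM W (hWF W h)
      have hWinv : W * M⁻¹ = What W := by
        conv_lhs => rw [hWeq]
        rw [Matrix.mul_assoc, hMinv, Matrix.mul_one]
      have h1 : W.mulVec (M⁻¹.mulVec (fhat x)) = (What W).mulVec (fhat x) := by
        rw [Matrix.mulVec_mulVec, hWinv]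
      rw [hu, Matrix.mulVec_sub, h1, ← h x hx, sub_self]
    have hclosed : IsClosed {W : Matrix (Fin k) (Fin m) ℝ | W.mulVec u = 0} :=
      isClosed_eq (continuous_id.matrix_mulVec continuous_const) continuous_const
    have hsub : msupport P ⊆ {W : Matrix (Fin k) (Fin m) ℝ | W.mulVec u = 0} :=
      msupport_subset_of_closed P hclosed (ae_iff.mp hCu)
    have hdot : ∀ t, dotProduct (Ws t (idx t)) u = 0 := fun t =>
      congrFun (hsub (hWsupp t)) (idx t)
    have hu0 : u = 0 := dot_eq_zero_forall _ hWli u hdot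
    have hfx : M⁻¹.mulVec (fhat x) = f x := by
      rw [hu] at hu0; rwa [sub_eq_zero] at hu0
    calc fhat x = (M * M⁻¹).mulVec (fhat x) := by rw [hMinv, Matrix.one_mulVec]
    _ = M.mulVec (M⁻¹.mulVec (fhat x)) := by rw [Matrix.mulVec_mulVec]
    _ = M.mulVec (f x) := by rw [hfx]
  -- Step D: sparsity forces M = D * Pmat
  set B : Matrix (Fin m) (Fin m) ℝ := M⁻¹ with hBdef
  have hBdet : IsUnit B.det := M.isUnit_nonsing_inv_det hMdet
  have hae_What : ∀ᵐ W ∂P, What W = W * B := by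
    filter_upwards [hGood] with W h
    have hWeq : W = What W * M := hWM W (hWF W h)
    rw [hBdef]
    conv_rhs => rw [hWeq]
    rw [Matrix.mul_assoc, hMinv, Matrix.mul_one]
  have hsp : (∫⁻ W, (colSparsity (W * B) : ℝ≥0∞) ∂P) ≤ ∫⁻ W, (colSparsity W : ℝ≥0∞) ∂P := by
    refine le_trans (le_of_eq (lintegral_congr_ae ?_)) hsparse
    filter_upwards [hae_What] with W h
    rw [h]
  have hev : ∀ (i : Fin k) (j : Fin m),
      Measurable fun W : Matrix (Fin k) (Fin m) ℝ => W i j := by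
    intro i j
    have h1 : Continuous fun W : Matrix (Fin k) (Fin m) ℝ => W i := continuous_apply i
    have h2 : Continuous fun v : Fin m → ℝ => v j := continuous_apply j
    exact (h2.comp h1).measurable
  have hmeasS : ∀ S : Set (Fin m),
      MeasurableSet {W : Matrix (Fin k) (Fin m) ℝ | colSupp W = S} := by
    intro S
    have hrw : {W : Matrix (Fin k) (Fin m) ℝ | colSupp W = S}
        = (⋂ j ∈ S, ⋃ i, {W : Matrix (Fin k) (Fin m) ℝ | W i j ≠ 0})
          ∩ (⋂ j ∈ Sᶜ, ⋂ i, {W : Matrix (Fin k) (Fin m) ℝ | W i j = 0}) := by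
      ext W
      simp only [Set.mem_setOf_eq, Set.mem_inter_iff, Set.mem_iInter, Set.mem_iUnion,
        Set.mem_compl_iff]
      constructor
      · rintro rfl
        refine ⟨fun j hj => hj, fun j hj i => ?_⟩
        by_contra hne; exact hj ⟨i, hne⟩
      · rintro ⟨h1, h2⟩
        ext j
        simp only [colSupp, Set.mem_setOf_eq]
        constructor
        · rintro ⟨i, hne⟩; by_contra hj; exact hne (h2 j hj i)
        · exact fun hj => h1 j hj
    rw [hrw]
    refine MeasurableSet.inter ?_ ?_
    · refine MeasurableSet.biInter (Set.to_countable _) fun j _ => ?_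
      refine MeasurableSet.iUnion fun i => ?_
      exact (hev i j (measurableSet_singleton (0 : ℝ))).compl
    · refine MeasurableSet.biInter (Set.to_countable _) fun j _ => ?_
      refine MeasurableSet.iInter fun i => ?_
      exact hev i j (measurableSet_singleton (0 : ℝ))
  -- a.e., the column-support class of W has positive probability
  have haeS : ∀ᵐ W ∂P, 0 < P {W' | colSupp W' = colSupp W} := by
    rw [ae_iff]
    have hsub : {W : Matrix (Fin k) (Fin m) ℝ | ¬ 0 < P {W' | colSupp W' = colSupp W}}
        ⊆ ⋃ S ∈ {S : Set (Fin m) | P {W' : Matrix (Fin k) (Fin m) ℝ | colSupp W' = S} = 0},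
          {W : Matrix (Fin k) (Fin m) ℝ | colSupp W = S} := by
      intro W hW
      simp only [Set.mem_setOf_eq, not_lt, nonpos_iff_eq_zero] at hW
      exact Set.mem_biUnion hW rfl
    refine measure_mono_null hsub ((measure_biUnion_null_iff (Set.to_countable _)).2 ?_)
    intro S hS
    exact hS
  -- a.e., A6 kicks in:  Tset B (colSupp W) ⊆ colSupp (W * B)
  have haeA6 : ∀ᵐ W ∂P, 0 < P {W' | colSupp W' = colSupp W} →
      Tset B (colSupp W) ⊆ colSupp (W * B) := by
    rw [ae_iff]
    set N : Set (Fin m) → Fin m → Set (Matrix (Fin k) (Fin m) ℝ) := fun S j =>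
      if h : 0 < P {W' : Matrix (Fin k) (Fin m) ℝ | colSupp W' = S} ∧ j ∈ Tset B S then
        {W | W.mulVec (fun i => if i ∈ S then B i j else 0) = 0}
          ∩ {W | colSupp W = S}
      else ∅ with hNdef
    have hNnull : ∀ S j, P (N S j) = 0 := by
      intro S j
      simp only [hNdef]
      by_cases h : 0 < P {W' : Matrix (Fin k) (Fin m) ℝ | colSupp W' = S} ∧ j ∈ Tset B S
      · rw [dif_pos h]
        obtain ⟨i0, hi0S, hi0⟩ := h.2
        refine hA6 S h.1 _ ?_ ?_
        · intro hzero
          have := congrFun hzero i0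
          simp only [if_pos hi0S] at this
          exact hi0 this
        · intro i hi
          simp only [Set.mem_setOf_eq] at hi
          by_contra hiS
          exact hi (if_neg hiS)
      · rw [dif_neg h]; exact measure_empty
    have hsub : {W : Matrix (Fin k) (Fin m) ℝ |
        ¬ (0 < P {W' | colSupp W' = colSupp W} → Tset B (colSupp W) ⊆ colSupp (W * B))}
        ⊆ ⋃ (S : Set (Fin m)) (j : Fin m), N S j := by
      intro W hW
      simp only [Set.mem_setOf_eq, Classical.not_imp, Set.not_subset] at hW
      obtain ⟨hpos, j, hjT, hjnot⟩ := hW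
      refine Set.mem_iUnion.2 ⟨colSupp W, Set.mem_iUnion.2 ⟨j, ?_⟩⟩
      simp only [hNdef]
      rw [dif_pos ⟨hpos, hjT⟩]
      refine ⟨?_, rfl⟩
      have hcols : ∀ i : Fin m, i ∉ colSupp W → ∀ i' : Fin k, W i' i = 0 := by
        intro i hi i'
        by_contra hne
        exact hi ⟨i', hne⟩
      have hmv : W.mulVec (fun i => if i ∈ colSupp W then B i j else 0)
          = W.mulVec (fun i => B i j) := by
        funext i'
        simp only [Matrix.mulVec, dotProduct]
        refine Finset.sum_congr rfl fun i _ => ?_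
        by_cases hi : i ∈ colSupp W
        · rw [if_pos hi]
        · rw [if_neg hi, hcols i hi i', zero_mul, zero_mul]
      have hWBj : ∀ i' : Fin k, (W * B) i' j = 0 := by
        intro i'
        by_contra hne
        exact hjnot ⟨i', hne⟩
      simp only [Set.mem_setOf_eq]
      rw [hmv]
      funext i'
      have := hWBj i'
      rw [Matrix.mul_apply] at this
      simpa [Matrix.mulVec, dotProduct] using this
    refine measure_mono_null hsub (measure_iUnion_null fun S => measure_iUnion_null fun j => hNnull S j)
  -- pointwise a.e. sparsity comparison
  have hae_ge : ∀ᵐ W ∂P, (colSparsity W : ℝ≥0∞) ≤ (colSparsity (W * B) : ℝ≥0∞) := by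
    filter_upwards [haeS, haeA6] with W hpos hT
    have h1 : colSparsity W ≤ colSparsity (W * B) := by
      calc colSparsity W = (colSupp W).ncard := rfl
      _ ≤ (Tset B (colSupp W)).ncard := ncard_le_Tset hBdet _
      _ ≤ (colSupp (W * B)).ncard := Set.ncard_le_ncard (hT hpos) (Set.toFinite _)
    exact_mod_cast h1
  have hbound : ∀ W : Matrix (Fin k) (Fin m) ℝ, (colSparsity W : ℝ≥0∞) ≤ (m : ℝ≥0∞) := by
    intro W
    have h1 : colSparsity W ≤ m := by
      have h2 := Set.ncard_le_ncard (Set.subset_univ (colSupp W)) Set.finite_univ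
      simpa [Set.ncard_univ, colSparsity] using h2
    exact_mod_cast h1
  have hfin : (∫⁻ W, (colSparsity W : ℝ≥0∞) ∂P) ≠ ⊤ := by
    refine ne_of_lt (lt_of_le_of_lt (lintegral_mono fun W => hbound W) ?_)
    rw [lintegral_const, measure_univ, mul_one]
    exact ENNReal.natCast_lt_top m
  -- the key counting identity on positive-probability supports
  have hQ : ∀ S : Set (Fin m), 0 < P {W : Matrix (Fin k) (Fin m) ℝ | colSupp W = S} →
      (Tset B S).ncard = S.ncard := by
    intro S hSpos
    by_contra hne
    have hlt : S.ncard < (Tset B S).ncard :=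
      lt_of_le_of_ne (ncard_le_Tset hBdet S) (Ne.symm hne)
    have hptwise : ∀ᵐ W ∂P, (colSparsity W : ℝ≥0∞)
        + Set.indicator {W' : Matrix (Fin k) (Fin m) ℝ | colSupp W' = S} (fun _ => (1 : ℝ≥0∞)) W
        ≤ (colSparsity (W * B) : ℝ≥0∞) := by
      filter_upwards [haeS, haeA6, hae_ge] with W hpos hT hge
      by_cases hWS : colSupp W = S
      · rw [Set.indicator_of_mem (show W ∈ {W' : Matrix (Fin k) (Fin m) ℝ | colSupp W' = S} from hWS)]
        have hTsub : Tset B S ⊆ colSupp (W * B) := by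
          rw [← hWS]; exact hT hpos
        have h2 : (Tset B S).ncard ≤ colSparsity (W * B) :=
          Set.ncard_le_ncard hTsub (Set.toFinite _)
        have h3 : colSparsity W + 1 ≤ colSparsity (W * B) := by
          have : colSparsity W = S.ncard := by rw [colSparsity, hWS]
          omega
        calc (colSparsity W : ℝ≥0∞) + 1 = ((colSparsity W + 1 : ℕ) : ℝ≥0∞) := by push_cast; ring
        _ ≤ (colSparsity (W * B) : ℝ≥0∞) := by exact_mod_cast h3
      · rw [Set.indicator_of_notMem (show W ∉ {W' : Matrix (Fin k) (Fin m) ℝ | colSupp W' = S} from hWS), add_zero]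
        exact hge
    have hint : (∫⁻ W, (colSparsity W : ℝ≥0∞) ∂P)
        + P {W : Matrix (Fin k) (Fin m) ℝ | colSupp W = S}
        ≤ ∫⁻ W, (colSparsity (W * B) : ℝ≥0∞) ∂P := by
      have h4 := lintegral_mono_ae hptwise
      rwa [lintegral_add_right _ ((measurable_const (a := (1 : ℝ≥0∞))).indicator (hmeasS S)),
        lintegral_indicator_const (hmeasS S) 1, one_mul] at h4
    have h5 := hint.trans hsp
    have h6 : P {W : Matrix (Fin k) (Fin m) ℝ | colSupp W = S} = 0 := by
      by_contra hp0
      have := ENNReal.lt_add_right hfin hp0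
      exact absurd (lt_of_lt_of_le this h5) (lt_irrefl _)
    rw [h6] at hSpos
    exact lt_irrefl 0 hSpos
  -- A7 + union closure: for every j, Tset B {j}ᶜ has m - 1 elements
  have hQc : ∀ j : Fin m, (Tset B ({j}ᶜ : Set (Fin m))).ncard = m - 1 := by
    intro j
    have key : ∀ 𝒯 : Finset (Set (Fin m)), (∀ S ∈ 𝒯, (Tset B S).ncard = S.ncard) →
        (Tset B (⋃ S ∈ 𝒯, S)).ncard = (⋃ S ∈ 𝒯, S).ncard := by
      intro 𝒯
      induction 𝒯 using Finset.induction_on with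
      | empty =>
        intro _
        have h0 : (⋃ S ∈ (∅ : Finset (Set (Fin m))), S) = (∅ : Set (Fin m)) := by simp
        rw [h0]
        have h1 : Tset B (∅ : Set (Fin m)) = ∅ := by
          ext j'; simp [Tset]
        rw [h1]
      | insert a s ha ih =>
        intro h
        rw [Finset.set_biUnion_insert]
        exact ncard_Tset_union hBdet (h a (Finset.mem_insert_self a s))
          (ih fun S hS => h S (Finset.mem_insert_of_mem hS))
    set 𝒮 := {S : Set (Fin m) | 0 < P {W : Matrix (Fin k) (Fin m) ℝ | colSupp W = S} ∧ j ∉ S}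
      with h𝒮
    haveI : Fintype (Set (Fin m)) := inferInstance
    have hUeq : (⋃ S ∈ 𝒮.toFinset, S) = ({j}ᶜ : Set (Fin m)) := by
      rw [← hA7 j]
      ext x
      simp only [Set.mem_iUnion, Finset.mem_coe, Set.mem_toFinset, h𝒮]
    have hkey := key 𝒮.toFinset (fun S hS => hQ S ((Set.mem_toFinset.mp hS).1))
    rw [hUeq] at hkey
    rw [hkey]
    have h1 : ({j}ᶜ : Set (Fin m)).ncard + ({j} : Set (Fin m)).ncard = m := by
      rw [add_comm]
      have := Set.ncard_add_ncard_compl ({j} : Set (Fin m))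
      simpa [Set.ncard_univ] using this
    have h2 : ({j} : Set (Fin m)).ncard = 1 := Set.ncard_singleton j
    omega
  -- extract the permutation structure of B
  have hnocolzero : ∀ c : Fin m, ∃ i, B i c ≠ 0 := by
    intro c
    by_contra h
    push_neg at h
    have := Matrix.det_eq_zero_of_column_eq_zero c h
    rw [this] at hBdet
    simp at hBdet
  have hexc : ∀ j : Fin m, ∃ c, ∀ i, i ≠ j → B i c = 0 := by
    intro j
    have hne : Tset B ({j}ᶜ : Set (Fin m)) ≠ Set.univ := by
      intro hEq
      have h1 := hQc j
      rw [hEq, Set.ncard_univ] at h1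
      simp only [Nat.card_eq_fintype_card, Fintype.card_fin] at h1
      omega
    obtain ⟨c, hc⟩ : ∃ c, c ∉ Tset B ({j}ᶜ : Set (Fin m)) := by
      by_contra h
      push_neg at h
      exact hne (Set.eq_univ_of_forall h)
    refine ⟨c, fun i hij => ?_⟩
    by_contra hne0
    exact hc ⟨i, hij, hne0⟩
  set σ0 : Fin m → Fin m := fun j => Classical.choose (hexc j) with hσ0
  have hσ0prop : ∀ j i, i ≠ j → B i (σ0 j) = 0 := fun j => Classical.choose_spec (hexc j)
  have hσ0diag : ∀ j, B j (σ0 j) ≠ 0 := by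
    intro j
    obtain ⟨i, hi⟩ := hnocolzero (σ0 j)
    by_cases hij : i = j
    · subst hij; exact hi
    · exact absurd (hσ0prop j i hij) hi
  have hσ0inj : Function.Injective σ0 := by
    intro j j' hjj'
    by_contra hne
    obtain ⟨i, hi⟩ := hnocolzero (σ0 j)
    by_cases hij : i = j
    · subst hij
      have := hσ0prop j' i (fun h => hne h)
      rw [← hjj'] at this
      exact hi this
    · exact hi (hσ0prop j i hij)
  have hσ0bij : Function.Bijective σ0 := Finite.injective_iff_bijective.mp hσ0inj
  set σ : Equiv.Perm (Fin m) := Equiv.ofBijective σ0 hσ0bij with hσdef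
  have hσapp : ∀ j, σ j = σ0 j := fun j => rfl
  set Pmat : Matrix (Fin m) (Fin m) ℝ :=
    Matrix.of fun i j => if σ.symm i = j then (1 : ℝ) else 0 with hPmatdef
  set D : Matrix (Fin m) (Fin m) ℝ :=
    Matrix.diagonal fun i => (B (σ.symm i) i)⁻¹ with hDdef
  have hDPmat : ∀ l j : Fin m, (D * Pmat) l j
      = (B (σ.symm l) l)⁻¹ * (if σ.symm l = j then (1 : ℝ) else 0) := by
    intro l j
    rw [hDdef, Matrix.diagonal_mul, hPmatdef]
    rfl
  have hBX : B * (D * Pmat) = 1 := by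
    ext i j
    rw [Matrix.mul_apply]
    rw [Finset.sum_eq_single (σ j)]
    · rw [hDPmat]
      have hsymm : σ.symm (σ j) = j := Equiv.symm_apply_apply σ j
      rw [if_pos hsymm, mul_one, hsymm]
      by_cases hij : i = j
      · subst hij
        rw [Matrix.one_apply_eq]
        have : B i (σ i) ≠ 0 := by rw [hσapp]; exact hσ0diag i
        field_simp
      · rw [Matrix.one_apply_ne hij]
        have : B i (σ j) = 0 := by
          rw [hσapp]; exact hσ0prop j i hij
        rw [this, zero_mul]
    · intro l _ hl
      rw [hDPmat]
      have : σ.symm l ≠ j := by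
        intro h
        apply hl
        rw [← h, Equiv.apply_symm_apply]
      rw [if_neg this, mul_zero, mul_zero]
    · intro h
      exact absurd (Finset.mem_univ (σ j)) h
  have hMeq : M = D * Pmat := by
    have h1 : B⁻¹ = D * Pmat := Matrix.inv_eq_right_inv hBX
    rw [← h1, hBdef, Matrix.nonsing_inv_nonsing_inv M hMdet]
  refine ⟨Pmat, D, ⟨σ.symm, hPmatdef⟩, Matrix.isDiag_diagonal _, ?_, ?_⟩
  · rw [hDdef, Matrix.det_diagonal]
    refine isUnit_iff_ne_zero.mpr (Finset.prod_ne_zero_iff.mpr fun i _ => ?_)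
    refine inv_ne_zero ?_
    have := hσ0diag (σ.symm i)
    rwa [show σ0 (σ.symm i) = i from (hσapp (σ.symm i)).symm.trans (Equiv.apply_symm_apply σ i)]
      at this
  · intro x hx
    rw [hfhatM x hx, hMeq]

end
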